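/- For any protocol Π for the game G_n there exists an order-oblivious protocol Π′ with E(Π′) ⊆ E(Π); in particular the cost of Π′ is at most the cost of Π. -/

import Mathlib

/-- The partial assignment written by an order-oblivious protocol `B` after `t` steps of
the stream `σ` (the element arriving at time `t` is `σ t`; `B ℓ α` is the bit Alice writes
at an arriving location `ℓ` when the current partial assignment is `α`). -/
def partOO {n : ℕ} (B : Fin n → (Fin n → Option Bool) → Bool) (σ : Equiv.Perm (Fin n)) :
    ℕ → (Fin n → Option Bool)
  | 0 => fun _ => none
  | t + 1 =>
    if h : t < n then
      Function.update (partOO B σ t) (σ ⟨t, h⟩) (some (B (σ ⟨t, h⟩) (partOO B σ t)))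
    else partOO B σ t

/-- The bit written by the order-oblivious protocol `B` at location `ℓ` on stream `σ`. -/
def writeOO {n : ℕ} (B : Fin n → (Fin n → Option Bool) → Bool) (σ : Equiv.Perm (Fin n))
    (ℓ : Fin n) : Bool :=
  B ℓ (partOO B σ ((σ.symm ℓ : ℕ)))

/-- The hypercube edge `Π_A(σ)`: the array written after the first `n - 1` steps, with a
single unfilled (`none`) coordinate at the last location `σ (n-1)`. -/
def edgeOO {n : ℕ} (B : Fin n → (Fin n → Option Bool) → Bool) (σ : Equiv.Perm (Fin n)) :
    Fin n → Option Bool :=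
  partOO B σ (n - 1)

/-- `v ∈ {0,1}^n` is an endpoint of the edge `e` (with `*` encoded as `none`). -/
def Compatible {n : ℕ} (v : Fin n → Bool) (e : Fin n → Option Bool) : Prop :=
  ∀ ℓ b, e ℓ = some b → v ℓ = b

/-- The degree of the vertex `v` in the graph `E(Π)` of the order-oblivious protocol `B`. -/
noncomputable def degOO {n : ℕ} (B : Fin n → (Fin n → Option Bool) → Bool)
    (v : Fin n → Bool) : ℕ :=
  {e : Fin n → Option Bool | (∃ σ : Equiv.Perm (Fin n), edgeOO B σ = e) ∧
    Compatible v e}.ncard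

/-- `β` extends `α` as a partial assignment. -/
def OExtends {n : ℕ} (α β : Fin n → Option Bool) : Prop :=
  ∀ ℓ b, α ℓ = some b → β ℓ = some b

/-- The protocol `B` is monotone: each map `A_ℓ` is monotone w.r.t. the extension order. -/
def MonotoneOO {n : ℕ} (B : Fin n → (Fin n → Option Bool) → Bool) : Prop :=
  ∀ (ℓ : Fin n) (α β : Fin n → Option Bool), OExtends α β → B ℓ α = true → B ℓ β = true

/-- The bit written at location `ℓ` by a general protocol for `G_n`, specified by a
function `A` of the stream prefix `σ 0, …, σ t` ending with the arriving location. -/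
def writeGen {n : ℕ} (A : List (Fin n) → Bool) (σ : Equiv.Perm (Fin n)) (ℓ : Fin n) :
    Bool :=
  A (((List.finRange n).map σ).take ((σ.symm ℓ : ℕ) + 1))

/-- The hypercube edge `Π_A(σ)` of a general protocol. -/
def edgeGen {n : ℕ} (A : List (Fin n) → Bool) (σ : Equiv.Perm (Fin n)) :
    Fin n → Option Bool :=
  fun ℓ => if (σ.symm ℓ : ℕ) = n - 1 then none else some (writeGen A σ ℓ)

/-- The degree of the vertex `v` in the graph `E(Π)` of the general protocol `A`. -/
noncomputable def degGen {n : ℕ} (A : List (Fin n) → Bool) (v : Fin n → Bool) : ℕ :=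
  {e : Fin n → Option Bool | (∃ σ : Equiv.Perm (Fin n), edgeGen A σ = e) ∧
    Compatible v e}.ncard

/-- Invariant: the partial assignment `α` is producible by running the general protocol `A`
on some arrival order `L` of the filled locations. -/
def InvA {n : ℕ} (A : List (Fin n) → Bool) (α : Fin n → Option Bool) : Prop :=
  ∃ L : List (Fin n), L.Nodup ∧ (∀ ℓ, ℓ ∈ L ↔ (α ℓ).isSome) ∧
    ∀ ℓ ∈ L, α ℓ = some (A (L.take (L.idxOf ℓ + 1)))

open Classical in
/-- A choice of witness order for the invariant. -/
noncomputable def witA {n : ℕ} (A : List (Fin n) → Bool) (α : Fin n → Option Bool) :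
    List (Fin n) :=
  if h : InvA A α then h.choose else []

theorem witA_spec {n : ℕ} (A : List (Fin n) → Bool) {α : Fin n → Option Bool}
    (h : InvA A α) :
    (witA A α).Nodup ∧ (∀ ℓ, ℓ ∈ witA A α ↔ (α ℓ).isSome) ∧
      ∀ ℓ ∈ witA A α, α ℓ = some (A ((witA A α).take ((witA A α).idxOf ℓ + 1))) := by
  rw [witA, dif_pos h]; exact h.choose_spec

/-- The order-oblivious protocol derived from `A`. -/
noncomputable def Bder {n : ℕ} (A : List (Fin n) → Bool) :
    Fin n → (Fin n → Option Bool) → Bool :=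
  fun ℓ α => A (witA A α ++ [ℓ])

theorem invA_step {n : ℕ} (A : List (Fin n) → Bool) {α : Fin n → Option Bool}
    (h : InvA A α) {ℓ : Fin n} (hℓ : α ℓ = none) :
    InvA A (Function.update α ℓ (some (Bder A ℓ α))) := by
  obtain ⟨hnd, hmem, hbit⟩ := witA_spec A h
  set L := witA A α with hL
  have hℓL : ℓ ∉ L := by
    intro hm
    have := (hmem ℓ).mp hm
    rw [hℓ] at this; simp at this
  refine ⟨L ++ [ℓ], ?_, ?_, ?_⟩
  · simpa [List.nodup_append] using ⟨hnd, fun a ha he => hℓL (he ▸ ha)⟩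
  · intro x
    rcases eq_or_ne x ℓ with rfl | hx
    · simp
    · simp [Function.update_of_ne hx, hmem x, hx]
  · intro x hx
    rcases eq_or_ne x ℓ with rfl | hxℓ
    · have hidx : (L ++ [x]).idxOf x = L.length := by
        rw [List.idxOf_append_of_notMem hℓL]; simp
      rw [hidx]
      have h2 : (L ++ [x]).take (L.length + 1) = L ++ [x] := by
        apply List.take_of_length_le; simp
      rw [h2, Function.update_self]
      rfl
    · have hxL : x ∈ L := by
        rcases List.mem_append.mp hx with h' | h'
        · exact h'
        · simp at h'; exact absurd h' hxℓ
      have hidx : (L ++ [ℓ]).idxOf x = L.idxOf x := List.idxOf_append_of_mem hxL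
      have hlt : L.idxOf x + 1 ≤ L.length := List.idxOf_lt_length_iff.mpr hxL
      rw [hidx, List.take_append_of_le_length hlt, Function.update_of_ne hxℓ]
      exact hbit x hxL

theorem partOO_eq_none {n : ℕ} (B : Fin n → (Fin n → Option Bool) → Bool)
    (σ : Equiv.Perm (Fin n)) (t : ℕ) (ℓ : Fin n) (h : t ≤ (σ.symm ℓ : ℕ)) :
    partOO B σ t ℓ = none := by
  induction t with
  | zero => rfl
  | succ t ih =>
    have ht : t < n := by have := (σ.symm ℓ).isLt; omega
    rw [partOO, dif_pos ht]
    have hne : σ ⟨t, ht⟩ ≠ ℓ := by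
      intro he
      have h2 : σ.symm ℓ = ⟨t, ht⟩ := by rw [← he]; simp
      rw [h2] at h; simp at h
    rw [Function.update_of_ne (Ne.symm hne)]
    exact ih (by omega)

theorem partOO_isSome {n : ℕ} (B : Fin n → (Fin n → Option Bool) → Bool)
    (σ : Equiv.Perm (Fin n)) (t : ℕ) (ℓ : Fin n) (h : (σ.symm ℓ : ℕ) < t) :
    (partOO B σ t ℓ).isSome := by
  induction t with
  | zero => omega
  | succ t ih =>
    rcases Nat.lt_or_ge (σ.symm ℓ : ℕ) t with h' | h'
    · rw [partOO]
      split_ifs with ht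
      · rcases eq_or_ne (σ ⟨t, ht⟩) ℓ with he | he
        · rw [Function.update_apply, if_pos he.symm]; rfl
        · rw [Function.update_of_ne (Ne.symm he)]; exact ih h'
      · exact ih h'
    · have h'' : (σ.symm ℓ : ℕ) = t := by omega
      have ht : t < n := h'' ▸ (σ.symm ℓ).isLt
      rw [partOO, dif_pos ht]
      have he : σ ⟨t, ht⟩ = ℓ := by
        have h2 : σ.symm ℓ = ⟨t, ht⟩ := Fin.ext h''
        rw [← h2]; simp
      rw [Function.update_apply, if_pos he.symm]; rfl

theorem partOO_inv {n : ℕ} (A : List (Fin n) → Bool) (σ : Equiv.Perm (Fin n)) (t : ℕ) :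
    InvA A (partOO (Bder A) σ t) := by
  induction t with
  | zero => exact ⟨[], by simp, by intro ℓ; simp [partOO], by simp⟩
  | succ t ih =>
    rw [partOO]
    split_ifs with ht
    · exact invA_step A ih (partOO_eq_none _ σ t _ (by simp))
    · exact ih

theorem edge_mem {n : ℕ} (A : List (Fin n) → Bool) (σ : Equiv.Perm (Fin n)) :
    ∃ τ : Equiv.Perm (Fin n), edgeGen A τ = edgeOO (Bder A) σ := by
  rcases Nat.eq_zero_or_pos n with hn | hn
  · subst hn
    exact ⟨σ, funext fun ℓ => ℓ.elim0⟩
  set B := Bder A with hB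
  set α := partOO B σ (n - 1) with hα
  have hedge : edgeOO B σ = α := rfl
  set m : Fin n := σ ⟨n - 1, by omega⟩ with hm
  have hsymm_m : (σ.symm m : ℕ) = n - 1 := by rw [hm]; simp
  have hαm : α m = none := partOO_eq_none B σ (n - 1) m (le_of_eq hsymm_m.symm)
  have hαsome : ∀ ℓ : Fin n, ℓ ≠ m → (α ℓ).isSome := by
    intro ℓ hℓ
    apply partOO_isSome
    have h1 : (σ.symm ℓ : ℕ) < n := (σ.symm ℓ).isLt
    have h2 : (σ.symm ℓ : ℕ) ≠ n - 1 := by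
      intro he
      apply hℓ
      have : σ.symm ℓ = σ.symm m := Fin.ext (he.trans hsymm_m.symm)
      simpa using congrArg σ this
    omega
  obtain ⟨L, hnd, hmem, hbit⟩ := partOO_inv A σ (n - 1)
  rw [← hα] at hmem hbit
  have hmL : m ∉ L := fun hc => by
    have := (hmem m).mp hc; rw [hαm] at this; simp at this
  set M : List (Fin n) := L ++ [m] with hM
  have hMnd : M.Nodup := by simpa [hM, List.nodup_append] using ⟨hnd, fun a ha he => hmL (he ▸ ha)⟩
  have hMmem : ∀ x : Fin n, x ∈ M := by
    intro x
    rcases eq_or_ne x m with rfl | hx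
    · simp [hM]
    · simp [hM, (hmem x).mpr (hαsome x hx)]
  have hMlen : M.length = n := by
    have h1 : M.toFinset.card = M.length := List.toFinset_card_of_nodup hMnd
    have h2 : M.toFinset = Finset.univ := Finset.eq_univ_iff_forall.mpr fun x => by
      simpa using hMmem x
    rw [h2] at h1
    simpa using h1.symm
  have hLlen : L.length = n - 1 := by
    have : M.length = L.length + 1 := by simp [hM]
    omega
  set f : Fin n → Fin n := fun i => M.get (Fin.cast hMlen.symm i) with hf
  have hfinj : Function.Injective f := by
    intro a b hab
    have := List.nodup_iff_injective_get.mp hMnd hab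
    simpa [Fin.ext_iff] using Fin.ext_iff.mp this
  set τ : Equiv.Perm (Fin n) := Equiv.ofBijective f (Finite.injective_iff_bijective.mp hfinj)
    with hτ
  have hτ_apply : ∀ i : Fin n, τ i = M.get (Fin.cast hMlen.symm i) := fun _ => rfl
  have hmap : (List.finRange n).map τ = M := by
    apply List.ext_get (by simp [hMlen])
    intro i h1 h2
    simp [hτ_apply]
  have hτ_last' : τ ⟨n - 1, by omega⟩ = m := by
    rw [hτ_apply]
    show (L ++ [m]).get ⟨n - 1, by simp [hLlen]⟩ = m
    simp only [List.get_eq_getElem]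
    rw [List.getElem_append_right (by omega)]
    simp
  have hτ_last : (τ.symm m : ℕ) = n - 1 := by
    have : τ.symm m = ⟨n - 1, by omega⟩ := by
      rw [Equiv.symm_apply_eq]; exact hτ_last'.symm
    rw [this]
  refine ⟨τ, ?_⟩
  rw [hedge]
  funext ℓ
  rcases eq_or_ne ℓ m with rfl | hℓ
  · rw [edgeGen, if_pos hτ_last, hαm]
  · have hℓL : ℓ ∈ L := (hmem ℓ).mpr (hαsome ℓ hℓ)
    have hjlt : L.idxOf ℓ < L.length := List.idxOf_lt_length_iff.mpr hℓL
    have hτj : τ ⟨L.idxOf ℓ, by omega⟩ = ℓ := by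
      rw [hτ_apply]
      show (L ++ [m]).get ⟨L.idxOf ℓ, by simp; omega⟩ = ℓ
      simp only [List.get_eq_getElem]
      rw [List.getElem_append_left hjlt]
      exact List.getElem_idxOf hjlt
    have hτsymm : (τ.symm ℓ : ℕ) = L.idxOf ℓ := by
      have : τ.symm ℓ = ⟨L.idxOf ℓ, by omega⟩ := by
        rw [Equiv.symm_apply_eq]; exact hτj.symm
      rw [this]
    have hne : (τ.symm ℓ : ℕ) ≠ n - 1 := by rw [hτsymm]; omega
    rw [edgeGen, if_neg hne]
    rw [writeGen, hmap, hτsymm, hM, List.take_append_of_le_length (by omega)]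
    exact (hbit ℓ hℓL).symm

/-- for any protocol `A` for `G_n` there is an order-oblivious protocol `B`
with `E(Π') ⊆ E(Π)`; in particular every vertex degree (hence the cost) of `B` is at most
that of `A`. -/
theorem exists_order_oblivious_protocol {n : ℕ} (A : List (Fin n) → Bool) :
    ∃ B : Fin n → (Fin n → Option Bool) → Bool,
      {e : Fin n → Option Bool | ∃ σ : Equiv.Perm (Fin n), edgeOO B σ = e} ⊆
        {e : Fin n → Option Bool | ∃ σ : Equiv.Perm (Fin n), edgeGen A σ = e} ∧
      ∀ v : Fin n → Bool, degOO B v ≤ degGen A v := by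
  refine ⟨Bder A, ?_, ?_⟩
  · rintro e ⟨σ, rfl⟩
    obtain ⟨τ, hτ⟩ := edge_mem A σ
    exact ⟨τ, hτ⟩
  · intro v
    apply Set.ncard_le_ncard _ (Set.toFinite _)
    rintro e ⟨⟨σ, rfl⟩, hc⟩
    obtain ⟨τ, hτ⟩ := edge_mem A σ
    exact ⟨⟨τ, hτ⟩, hc⟩
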